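/- Let S₁ and S₂ be byte strings. If no merge applied during the run of encode on S₁ ⧺ S₂ crosses position |S₁|, then encode(S₁ ⧺ S₂) = encode(S₁) ⧺ encode(S₂). -/

import Mathlib

/-!
Formalization of a BPE tokenizer with an ordered merge list.

* `σ` is the (finite) byte alphabet, `τ` is the (finite) vocabulary of tokens.
* `base` embeds each byte as a distinct base token.
* `dec` decodes a single token to a byte string; it is extended to token
  sequences by concatenation (`decodeSeq`).
* `merges` is the ordered merge list; each merge `(l, r, n)` replaces an
  adjacent pair `(l, r)` by the single token `n`, and satisfies
  `dec n = dec l ++ dec r`.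
* `encode` turns a byte string into its base tokens and then, processing the
  merges in order, repeatedly replaces the leftmost adjacent occurrence of
  `(l, r)` by `n` until no occurrence remains, before moving to the next merge.
-/

structure BPE (σ τ : Type*) where
  base : σ → τ
  dec : τ → List σ
  merges : List (τ × τ × τ)
  base_inj : Function.Injective base
  dec_base : ∀ b, dec (base b) = [b]
  dec_merge : ∀ m ∈ merges, dec m.2.2 = dec m.1 ++ dec m.2.1

namespace BPE

variable {σ τ : Type*} [DecidableEq τ]

/-- Decode a token sequence by concatenating the decodings of its tokens. -/
def decodeSeq (B : BPE σ τ) (T : List τ) : List σ := (T.map B.dec).flatten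

/-- Replace the leftmost adjacent occurrence of `(l, r)` by `n`, if any,
also returning the starting byte position of the replaced pair. -/
def replaceLeftmost (B : BPE σ τ) (l r n : τ) : List τ → Option (ℕ × List τ)
  | [] => none
  | [_] => none
  | t :: u :: rest =>
      if t = l ∧ u = r then some (0, n :: rest)
      else (B.replaceLeftmost l r n (u :: rest)).map
        (fun p => (p.1 + (B.dec t).length, t :: p.2))

/-- Repeatedly replace the leftmost adjacent occurrence of `(l, r)` by `n`
until no occurrence remains (the fuel, taken to be the length of the list,
suffices since every replacement shortens the list).  Also returns the list
of byte positions at which replacements were performed, in order. -/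
def runMerge (B : BPE σ τ) (l r n : τ) : ℕ → List τ → List τ × List ℕ
  | 0, T => (T, [])
  | fuel + 1, T =>
    match B.replaceLeftmost l r n T with
    | none => (T, [])
    | some (p, T') =>
      let q := B.runMerge l r n fuel T'
      (q.1, p :: q.2)

/-- Process an (indexed) list of merges in order, starting from token sequence
`T`; returns the final token sequence together with the ordered list of merge
applications performed, each recorded as a pair
(index of the merge in the merge list, starting byte position). -/
def encodeRunAux (B : BPE σ τ) : List (ℕ × τ × τ × τ) → List τ → List τ × List (ℕ × ℕ)
  | [], T => (T, [])
  | (i, l, r, n) :: ms, T =>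
    let q := B.runMerge l r n T.length T
    let q' := B.encodeRunAux ms q.1
    (q'.1, q.2.map (fun p => (i, p)) ++ q'.2)

/-- The full run of the BPE encoder on a byte string `S`: the final token
sequence together with the ordered list of merge applications performed. -/
def encodeRun (B : BPE σ τ) (S : List σ) : List τ × List (ℕ × ℕ) :=
  B.encodeRunAux (B.merges.zipIdx.map (fun p => (p.2, p.1))) (S.map B.base)

/-- BPE encoding of a byte string. -/
def encode (B : BPE σ τ) (S : List σ) : List τ := (B.encodeRun S).1

/-- The ordered list of merge applications (merge index, starting byte
position) performed during the run of `encode` on `S`. -/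
def encodeApps (B : BPE σ τ) (S : List σ) : List (ℕ × ℕ) := (B.encodeRun S).2

/-- A token sequence is *valid* if it is the canonical encoding of the byte
string it decodes to. -/
def Valid (B : BPE σ τ) (T : List τ) : Prop := B.encode (B.decodeSeq T) = T

/-- The merge list is in *normal form*:
(i) each token is produced by at most one merge;
(ii) every token `t` satisfies `encode (dec t) = [t]`;
(iii) every merge occurs later in the merge list than the merges producing
each of its two input tokens. -/
def NormalForm (B : BPE σ τ) : Prop :=
  (∀ i j (hi : i < B.merges.length) (hj : j < B.merges.length),
      (B.merges[i]'hi).2.2 = (B.merges[j]'hj).2.2 → i = j) ∧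
  (∀ t : τ, B.encode (B.dec t) = [t]) ∧
  (∀ i j (hi : i < B.merges.length) (hj : j < B.merges.length),
      (B.merges[i]'hi).2.2 = (B.merges[j]'hj).1 ∨
        (B.merges[i]'hi).2.2 = (B.merges[j]'hj).2.1 → i < j)

/-- The merge application `app = (t, p)` *crosses* byte position `c` if the
token it creates (the output of merge `t`, starting at byte position `p`)
has a byte span properly containing `c`. -/
def AppCrosses (B : BPE σ τ) (app : ℕ × ℕ) (c : ℕ) : Prop :=
  ∃ h : app.1 < B.merges.length,
    app.2 < c ∧ c < app.2 + (B.dec (B.merges[app.1]'h).2.2).length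

/-- Some merge applied during the run of `encode` on `S` crosses position `c`. -/
def MergeCrossesInRun (B : BPE σ τ) (S : List σ) (c : ℕ) : Prop :=
  ∃ app ∈ B.encodeApps S, B.AppCrosses app c

/-- The token sequence `U` contains a token whose byte span properly
contains position `c`. -/
def TokenCrosses (B : BPE σ τ) (U : List τ) (c : ℕ) : Prop :=
  ∃ k, k < U.length ∧
    (B.decodeSeq (U.take k)).length < c ∧ c < (B.decodeSeq (U.take (k + 1))).length

end BPE
namespace BPE

variable {σ τ : Type*} [DecidableEq τ]

/-- The *Valid Covering Tree* of a byte string `P`: the set of all nonempty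
token sequences `T = [t₁, …, tₙ]` such that (1) `P` is a prefix of
`decode T`, (2) `decode [t₁, …, t_{n-1}]` is a prefix of `P`, and
(3) `T` is valid. -/
def VCT (B : BPE σ τ) (P : List σ) : Set (List τ) :=
  {T | T ≠ [] ∧ P <+: B.decodeSeq T ∧ B.decodeSeq T.dropLast <+: P ∧ B.Valid T}

/-- The maximal prefix of a token sequence whose total decoded length is at
most `k`, i.e. the tokens whose byte spans end at or before position `k`
(together with their spans, which are determined by the preceding tokens). -/
def spanPrefix (B : BPE σ τ) (k : ℕ) : List τ → List τ
  | [] => []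
  | t :: T =>
      if (B.dec t).length ≤ k then t :: B.spanPrefix (k - (B.dec t).length) T
      else []

/-- `L₀` is a *lookahead bound* for the tokenizer if whenever two byte strings
agree on their first `k + L₀` bytes, the tokens of their encodings whose byte
spans end at or before position `k` coincide (with identical spans). -/
def LookaheadBound (B : BPE σ τ) (L₀ : ℕ) : Prop :=
  ∀ (x x' : List σ) (k : ℕ), x.take (k + L₀) = x'.take (k + L₀) →
    B.spanPrefix k (B.encode x) = B.spanPrefix k (B.encode x')

/-- `U'` is the minimal covering prefix of `U` with respect to `P`: the
shortest prefix of `U` whose decoding has `P` as a prefix. -/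
def IsMinCover (B : BPE σ τ) (P : List σ) (U U' : List τ) : Prop :=
  U' <+: U ∧ P <+: B.decodeSeq U' ∧
    ∀ U'' : List τ, U'' <+: U → P <+: B.decodeSeq U'' → U'.length ≤ U''.length

/-- The pair `(l, r)` occurs adjacently in `T`. -/
def PairAdj (l r : τ) (T : List τ) : Prop := ∃ A C, T = A ++ l :: r :: C

/-- The merge application `a = (t, i)` (merge index `t`, starting byte
position `i` of the left token) is applicable to the token sequence `T`. -/
def Applicable (B : BPE σ τ) (a : ℕ × ℕ) (T : List τ) : Prop :=
  ∃ h : a.1 < B.merges.length, ∃ A C : List τ,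
    T = A ++ (B.merges[a.1]'h).1 :: (B.merges[a.1]'h).2.1 :: C ∧
      (B.decodeSeq A).length = a.2

/-- `T'` is obtained from `T` by performing the merge application `a = (t, i)`:
the input pair of merge `t`, occurring adjacently in `T` with the left token
starting at byte position `i`, is replaced by the output token of merge `t`. -/
def ApplyApp (B : BPE σ τ) (a : ℕ × ℕ) (T T' : List τ) : Prop :=
  ∃ h : a.1 < B.merges.length, ∃ A C : List τ,
    T = A ++ (B.merges[a.1]'h).1 :: (B.merges[a.1]'h).2.1 :: C ∧
      (B.decodeSeq A).length = a.2 ∧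
      T' = A ++ (B.merges[a.1]'h).2.2 :: C

/-- Lexicographic order on merge applications `(t, i)`. -/
def appLE (a a' : ℕ × ℕ) : Prop :=
  a.1 < a'.1 ∨ (a.1 = a'.1 ∧ a.2 ≤ a'.2)

/-- `GreedyChain B T₀ apps T` holds when the sequence of merge applications
`apps` leads from token sequence `T₀` to token sequence `T`, and each applied
application is lexicographically least among those applicable to the current
token sequence. -/
inductive GreedyChain (B : BPE σ τ) : List τ → List (ℕ × ℕ) → List τ → Prop
  | nil (T : List τ) : GreedyChain B T [] T
  | cons {T T' Tf : List τ} {a : ℕ × ℕ} {apps : List (ℕ × ℕ)} :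
      B.ApplyApp a T T' →
      (∀ a', B.Applicable a' T → appLE a a') →
      GreedyChain B T' apps Tf →
      GreedyChain B T (a :: apps) Tf

end BPE


namespace BPE

variable {σ τ : Type*} [DecidableEq τ]

lemma decodeSeq_nil (B : BPE σ τ) : B.decodeSeq ([] : List τ) = [] := rfl

lemma decodeSeq_cons (B : BPE σ τ) (t : τ) (T : List τ) :
    B.decodeSeq (t :: T) = B.dec t ++ B.decodeSeq T := by
  simp [decodeSeq]

lemma decodeSeq_append (B : BPE σ τ) (T U : List τ) :
    B.decodeSeq (T ++ U) = B.decodeSeq T ++ B.decodeSeq U := by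
  simp [decodeSeq]

lemma rl_decomp (B : BPE σ τ) (l r n : τ) :
    ∀ {T T' : List τ} {p : ℕ}, B.replaceLeftmost l r n T = some (p, T') →
    ∃ A C, T = A ++ l :: r :: C ∧ T' = A ++ n :: C ∧ p = (B.decodeSeq A).length
  | [], _, _, h => by simp [replaceLeftmost] at h
  | [t], _, _, h => by simp [replaceLeftmost] at h
  | t :: u :: rest, T', p, h => by
    rw [replaceLeftmost] at h
    split_ifs at h with hc
    · obtain ⟨h1, h2⟩ := hc
      rw [Option.some_inj] at h
      have hp : p = 0 := (congrArg Prod.fst h).symm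
      have hT : T' = n :: rest := (congrArg Prod.snd h).symm
      exact ⟨[], rest, by simp [h1, h2], by simp [hT], by simp [hp, decodeSeq_nil]⟩
    · obtain ⟨⟨p₀, T₀⟩, hsome, heq⟩ := Option.map_eq_some_iff.mp h
      obtain ⟨A, C, hT, hT', hp⟩ := rl_decomp B l r n hsome
      simp only [Prod.mk.injEq] at heq
      refine ⟨t :: A, C, by simp [hT], ?_, ?_⟩
      · rw [← heq.2]; simp [hT']
      · rw [← heq.1, hp, decodeSeq_cons]; simp [Nat.add_comm]

lemma rl_length (B : BPE σ τ) {l r n : τ} {T T' : List τ} {p : ℕ}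
    (h : B.replaceLeftmost l r n T = some (p, T')) : T'.length + 1 = T.length := by
  obtain ⟨A, C, hT, hT', -⟩ := B.rl_decomp l r n h
  subst hT hT'; simp; omega

lemma rl_two_le (B : BPE σ τ) {l r n : τ} {T T' : List τ} {p : ℕ}
    (h : B.replaceLeftmost l r n T = some (p, T')) : 2 ≤ T.length := by
  obtain ⟨A, C, hT, -, -⟩ := B.rl_decomp l r n h
  subst hT; simp; omega

lemma rl_decodeSeq (B : BPE σ τ) {l r n : τ} (hd : B.dec n = B.dec l ++ B.dec r)
    {T T' : List τ} {p : ℕ} (h : B.replaceLeftmost l r n T = some (p, T')) :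
    B.decodeSeq T' = B.decodeSeq T := by
  obtain ⟨A, C, hT, hT', -⟩ := B.rl_decomp l r n h
  subst hT hT'
  simp [decodeSeq_append, decodeSeq_cons, hd]

lemma rl_ne (B : BPE σ τ) {l r n : τ} (hd : B.dec n = B.dec l ++ B.dec r)
    {T T' : List τ} {p : ℕ} (h : B.replaceLeftmost l r n T = some (p, T'))
    (hne : ∀ t ∈ T, B.dec t ≠ []) : ∀ t ∈ T', B.dec t ≠ [] := by
  obtain ⟨A, C, hT, hT', -⟩ := B.rl_decomp l r n h
  subst hT hT'
  intro t ht
  simp only [List.mem_append, List.mem_cons] at ht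
  rcases ht with ht | ht | ht
  · exact hne t (by simp [ht])
  · subst ht
    have hl : B.dec l ≠ [] := hne l (by simp)
    rw [hd]
    simp only [ne_eq, List.append_eq_nil_iff, not_and]
    intro h'; exact absurd h' hl
  · exact hne t (by simp [ht])

lemma rl_append_cases (B : BPE σ τ) (l r n : τ) :
    ∀ {U₁ U₂ T' : List τ} {p : ℕ},
    B.replaceLeftmost l r n (U₁ ++ U₂) = some (p, T') →
    (∃ V₁, B.replaceLeftmost l r n U₁ = some (p, V₁) ∧ T' = V₁ ++ U₂) ∨
    (B.replaceLeftmost l r n U₁ = none ∧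
      ∃ A C, U₁ = A ++ [l] ∧ U₂ = r :: C ∧ p = (B.decodeSeq A).length ∧
        T' = A ++ n :: C) ∨
    (B.replaceLeftmost l r n U₁ = none ∧
      ∃ p' V₂, B.replaceLeftmost l r n U₂ = some (p', V₂) ∧
        p = (B.decodeSeq U₁).length + p' ∧ T' = U₁ ++ V₂)
  | [], U₂, T', p, h => by
    refine Or.inr (Or.inr ⟨rfl, p, T', ?_, by simp [decodeSeq_nil], by simp⟩)
    simpa using h
  | [t], U₂, T', p, h => by
    cases U₂ with
    | nil => simp [replaceLeftmost] at h
    | cons u rest =>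
    rw [List.singleton_append, replaceLeftmost] at h
    split_ifs at h with hc
    · obtain ⟨h1, h2⟩ := hc
      rw [Option.some_inj] at h
      have hp : p = 0 := (congrArg Prod.fst h).symm
      have hT : T' = n :: rest := (congrArg Prod.snd h).symm
      exact Or.inr (Or.inl ⟨by simp [replaceLeftmost], [], rest, by simp [h1],
        by simp [h2], by simp [hp, decodeSeq_nil], by simp [hT]⟩)
    · obtain ⟨⟨p₀, T₀⟩, hsome, heq⟩ := Option.map_eq_some_iff.mp h
      simp only [Prod.mk.injEq] at heq
      refine Or.inr (Or.inr ⟨by simp [replaceLeftmost], p₀, T₀, hsome, ?_, ?_⟩)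
      · rw [← heq.1]; simp [decodeSeq_cons, decodeSeq_nil, Nat.add_comm]
      · rw [← heq.2]; simp
  | t :: u :: rest, U₂, T', p, h => by
    rw [List.cons_append, List.cons_append, replaceLeftmost] at h
    split_ifs at h with hc
    · rw [Option.some_inj] at h
      have hp : p = 0 := (congrArg Prod.fst h).symm
      have hT : T' = n :: (rest ++ U₂) := (congrArg Prod.snd h).symm
      refine Or.inl ⟨n :: rest, ?_, by simp [hT]⟩
      rw [replaceLeftmost, if_pos hc, hp]
    · obtain ⟨⟨p₀, T₀⟩, hsome, heq⟩ := Option.map_eq_some_iff.mp h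
      simp only [Prod.mk.injEq] at heq
      rw [← List.cons_append] at hsome
      rcases B.rl_append_cases l r n hsome with
        ⟨V₁, hV₁, hT₀⟩ | ⟨hnone, A, C, hU₁, hU₂, hp₀, hT₀⟩ |
        ⟨hnone, p', V₂, hV₂, hp₀, hT₀⟩
      · refine Or.inl ⟨t :: V₁, ?_, ?_⟩
        · rw [replaceLeftmost, if_neg hc, hV₁, Option.map_some, ← heq.1]
        · rw [← heq.2, hT₀]; simp
      · refine Or.inr (Or.inl ⟨?_, t :: A, C, by simp [hU₁], hU₂, ?_, ?_⟩)
        · rw [replaceLeftmost, if_neg hc, hnone]; rfl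
        · rw [← heq.1, hp₀, decodeSeq_cons]; simp [Nat.add_comm]
        · rw [← heq.2, hT₀]; simp
      · refine Or.inr (Or.inr ⟨?_, p', V₂, hV₂, ?_, ?_⟩)
        · rw [replaceLeftmost, if_neg hc, hnone]; rfl
        · rw [← heq.1, hp₀]
          simp only [decodeSeq_cons, List.length_append]
          omega
        · rw [← heq.2, hT₀]; simp

lemma rl_none_append (B : BPE σ τ) (l r n : τ) :
    ∀ {U₁ U₂ : List τ}, B.replaceLeftmost l r n (U₁ ++ U₂) = none →
    B.replaceLeftmost l r n U₁ = none ∧ B.replaceLeftmost l r n U₂ = none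
  | [], U₂, h => ⟨rfl, by simpa using h⟩
  | [t], U₂, h => by
    cases U₂ with
    | nil => exact ⟨by simp [replaceLeftmost], by simp [replaceLeftmost]⟩
    | cons u rest =>
    rw [List.singleton_append, replaceLeftmost] at h
    split_ifs at h with hc
    simp only [Option.map_eq_none_iff] at h
    exact ⟨by simp [replaceLeftmost], h⟩
  | t :: u :: rest, U₂, h => by
    rw [List.cons_append, List.cons_append, replaceLeftmost] at h
    split_ifs at h with hc
    simp only [Option.map_eq_none_iff] at h
    rw [← List.cons_append] at h
    obtain ⟨h1, h2⟩ := B.rl_none_append l r n h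
    refine ⟨?_, h2⟩
    rw [replaceLeftmost, if_neg hc, h1]; rfl

lemma runMerge_none (B : BPE σ τ) {l r n : τ} {T : List τ}
    (h : B.replaceLeftmost l r n T = none) (f : ℕ) :
    B.runMerge l r n f T = (T, []) := by
  cases f with
  | zero => rfl
  | succ f => rw [runMerge, h]

lemma runMerge_fuel (B : BPE σ τ) (l r n : τ) :
    ∀ (f₁ : ℕ) {T : List τ}, T.length ≤ f₁ → ∀ (f₂ : ℕ), T.length ≤ f₂ →
    B.runMerge l r n f₁ T = B.runMerge l r n f₂ T := by
  intro f₁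
  induction f₁ with
  | zero =>
    intro T hT f₂ _
    have hTnil : T = [] := List.length_eq_zero_iff.mp (Nat.le_zero.mp hT)
    subst hTnil
    rw [B.runMerge_none (T := ([] : List τ)) (by simp [replaceLeftmost]) f₂]
    rfl
  | succ f ih =>
    intro T hT f₂ hT₂
    cases f₂ with
    | zero =>
      have hTnil : T = [] := List.length_eq_zero_iff.mp (Nat.le_zero.mp hT₂)
      subst hTnil
      rw [B.runMerge_none (T := ([] : List τ)) (by simp [replaceLeftmost]) (f + 1)]
      rfl
    | succ f₂ =>
      cases hrl : B.replaceLeftmost l r n T with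
      | none => rw [B.runMerge_none hrl, B.runMerge_none hrl]
      | some q =>
        obtain ⟨p, T'⟩ := q
        have hlen := B.rl_length hrl
        simp only [runMerge, hrl]
        rw [ih (by omega) f₂ (by omega)]

lemma runMerge_decodeSeq (B : BPE σ τ) {l r n : τ} (hd : B.dec n = B.dec l ++ B.dec r) :
    ∀ (f : ℕ) (T : List τ), B.decodeSeq (B.runMerge l r n f T).1 = B.decodeSeq T := by
  intro f
  induction f with
  | zero => intro T; rfl
  | succ f ih =>
    intro T
    cases hrl : B.replaceLeftmost l r n T with
    | none => rw [B.runMerge_none hrl]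
    | some q =>
      obtain ⟨p, T'⟩ := q
      have h1 : B.decodeSeq T' = B.decodeSeq T := B.rl_decodeSeq hd hrl
      simp only [runMerge, hrl]
      rw [ih T', h1]

lemma runMerge_ne (B : BPE σ τ) {l r n : τ} (hd : B.dec n = B.dec l ++ B.dec r) :
    ∀ (f : ℕ) (T : List τ), (∀ t ∈ T, B.dec t ≠ []) →
    ∀ t ∈ (B.runMerge l r n f T).1, B.dec t ≠ [] := by
  intro f
  induction f with
  | zero => intro T h; exact h
  | succ f ih =>
    intro T h
    cases hrl : B.replaceLeftmost l r n T with
    | none => rw [B.runMerge_none hrl]; exact h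
    | some q =>
      obtain ⟨p, T'⟩ := q
      simp only [runMerge, hrl]
      exact ih T' (B.rl_ne hd hrl h)

lemma runMerge_split (B : BPE σ τ) {l r n : τ} (hd : B.dec n = B.dec l ++ B.dec r) :
    ∀ (f : ℕ) (U₁ U₂ : List τ), (U₁ ++ U₂).length ≤ f →
    (∀ t ∈ U₁ ++ U₂, B.dec t ≠ []) →
    (∀ p ∈ (B.runMerge l r n f (U₁ ++ U₂)).2,
      ¬(p < (B.decodeSeq U₁).length ∧
        (B.decodeSeq U₁).length < p + (B.dec n).length)) →
    (B.runMerge l r n f (U₁ ++ U₂)).1 =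
      (B.runMerge l r n f U₁).1 ++ (B.runMerge l r n f U₂).1 := by
  intro f
  induction f with
  | zero =>
    intro U₁ U₂ hf _ _
    rw [List.length_append] at hf
    have h1 : U₁ = [] := List.length_eq_zero_iff.mp (by omega)
    have h2 : U₂ = [] := List.length_eq_zero_iff.mp (by omega)
    subst h1; subst h2; rfl
  | succ f ih =>
    intro U₁ U₂ hf hne hcross
    cases hrl : B.replaceLeftmost l r n (U₁ ++ U₂) with
    | none =>
      obtain ⟨h1, h2⟩ := B.rl_none_append l r n hrl
      rw [B.runMerge_none hrl, B.runMerge_none h1, B.runMerge_none h2]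
    | some q =>
      obtain ⟨p, T'⟩ := q
      have e1 : B.runMerge l r n (f + 1) (U₁ ++ U₂)
          = ((B.runMerge l r n f T').1, p :: (B.runMerge l r n f T').2) := by
        simp only [runMerge, hrl]
      have hcross' : ∀ p'' ∈ p :: (B.runMerge l r n f T').2,
          ¬(p'' < (B.decodeSeq U₁).length ∧
            (B.decodeSeq U₁).length < p'' + (B.dec n).length) := by
        rw [e1] at hcross
        exact hcross
      simp only [List.mem_cons] at hcross'
      have hlen := B.rl_length hrl
      rw [List.length_append] at hf hlen
      have hneT' : ∀ t ∈ T', B.dec t ≠ [] := B.rl_ne hd hrl hne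
      rw [e1]
      rcases B.rl_append_cases l r n hrl with
        ⟨V₁, hV₁, hT'⟩ | ⟨hnone, A, C, hU₁, hU₂, hp, hT'⟩ |
        ⟨hnone, p', V₂, hV₂, hp, hT'⟩
      · -- replacement inside U₁
        subst hT'
        have hV₁len := B.rl_length hV₁
        have h2le := B.rl_two_le hV₁
        have hdecV₁ : B.decodeSeq V₁ = B.decodeSeq U₁ := B.rl_decodeSeq hd hV₁
        have hih := ih V₁ U₂ (by rw [List.length_append]; omega) hneT'
          (by intro p'' hp''; rw [hdecV₁]; exact hcross' p'' (Or.inr hp''))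
        have e2 : B.runMerge l r n (f + 1) U₁
            = ((B.runMerge l r n f V₁).1, p :: (B.runMerge l r n f V₁).2) := by
          simp only [runMerge, hV₁]
        have hU₂f : B.runMerge l r n (f + 1) U₂ = B.runMerge l r n f U₂ :=
          B.runMerge_fuel l r n (f + 1) (by omega) f (by omega)
        rw [e2, hU₂f]
        exact hih
      · -- boundary pair: contradiction with hcross
        exfalso
        have hl : B.dec l ≠ [] := hne l (by simp [hU₁])
        have hr : B.dec r ≠ [] := hne r (by simp [hU₂])
        have hll : 0 < (B.dec l).length := List.length_pos_iff.mpr hl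
        have hrl' : 0 < (B.dec r).length := List.length_pos_iff.mpr hr
        have hcU₁ : (B.decodeSeq U₁).length
            = (B.decodeSeq A).length + (B.dec l).length := by
          rw [hU₁, decodeSeq_append, decodeSeq_cons, decodeSeq_nil]
          simp
        refine hcross' p (Or.inl rfl) ⟨?_, ?_⟩
        · omega
        · rw [hd]
          simp only [List.length_append]
          omega
      · -- replacement inside U₂
        subst hT'
        have hV₂len := B.rl_length hV₂
        have h2le := B.rl_two_le hV₂
        have hih := ih U₁ V₂ (by rw [List.length_append]; omega)
          (by
            intro t ht
            simp only [List.mem_append] at ht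
            rcases ht with ht | ht
            · exact hne t (by simp [ht])
            · exact hneT' t (by simp [ht]))
          (by intro p'' hp''; exact hcross' p'' (Or.inr hp''))
        have e2 : B.runMerge l r n (f + 1) U₂
            = ((B.runMerge l r n f V₂).1, p' :: (B.runMerge l r n f V₂).2) := by
          simp only [runMerge, hV₂]
        rw [e2, B.runMerge_none hnone (f + 1), hih, B.runMerge_none hnone f]

lemma encodeRunAux_split (B : BPE σ τ) :
    ∀ (ms : List (ℕ × τ × τ × τ)),
    (∀ x ∈ ms, ∃ hx : x.1 < B.merges.length, B.merges[x.1] = x.2) →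
    ∀ (U₁ U₂ : List τ), (∀ t ∈ U₁ ++ U₂, B.dec t ≠ []) →
    (∀ a ∈ (B.encodeRunAux ms (U₁ ++ U₂)).2,
      ¬ B.AppCrosses a (B.decodeSeq U₁).length) →
    (B.encodeRunAux ms (U₁ ++ U₂)).1 =
      (B.encodeRunAux ms U₁).1 ++ (B.encodeRunAux ms U₂).1 := by
  intro ms
  induction ms with
  | nil => intro _ U₁ U₂ _ _; rfl
  | cons m ms ih =>
    obtain ⟨i, l, r, n⟩ := m
    intro hms U₁ U₂ hne hcross
    obtain ⟨hi, hm⟩ := hms (i, l, r, n) (by simp)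
    have hd : B.dec n = B.dec l ++ B.dec r := by
      have := B.dec_merge (B.merges[i]'hi) (List.getElem_mem hi)
      rw [hm] at this
      exact this
    have hcross1 : ∀ p ∈ (B.runMerge l r n (U₁ ++ U₂).length (U₁ ++ U₂)).2,
        ¬(p < (B.decodeSeq U₁).length ∧
          (B.decodeSeq U₁).length < p + (B.dec n).length) := by
      intro p hp ⟨h1, h2⟩
      refine hcross (i, p) ?_ ⟨hi, h1, ?_⟩
      · rw [encodeRunAux]
        simp only [List.mem_append, List.mem_map]
        exact Or.inl ⟨p, hp, rfl⟩
      · rw [hm]; exact h2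
    have hsplit := B.runMerge_split hd (U₁ ++ U₂).length U₁ U₂ le_rfl hne hcross1
    have hfuel1 : B.runMerge l r n (U₁ ++ U₂).length U₁
        = B.runMerge l r n U₁.length U₁ :=
      B.runMerge_fuel l r n _ (by simp) _ le_rfl
    have hfuel2 : B.runMerge l r n (U₁ ++ U₂).length U₂
        = B.runMerge l r n U₂.length U₂ :=
      B.runMerge_fuel l r n _ (by simp) _ le_rfl
    rw [hfuel1, hfuel2] at hsplit
    set V₁ := (B.runMerge l r n U₁.length U₁).1 with hV₁def
    set V₂ := (B.runMerge l r n U₂.length U₂).1 with hV₂def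
    have hdecV₁ : B.decodeSeq V₁ = B.decodeSeq U₁ := B.runMerge_decodeSeq hd _ _
    have hneV : ∀ t ∈ V₁ ++ V₂, B.dec t ≠ [] := by
      intro t ht
      simp only [List.mem_append] at ht
      rcases ht with ht | ht
      · exact B.runMerge_ne hd U₁.length U₁
          (fun t ht => hne t (by simp [ht])) t ht
      · exact B.runMerge_ne hd U₂.length U₂
          (fun t ht => hne t (by simp [ht])) t ht
    have hih := ih (fun x hx => hms x (by simp [hx])) V₁ V₂ hneV
      (by
        intro a ha
        rw [hdecV₁]
        refine hcross a ?_
        simp only [encodeRunAux, List.mem_append]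
        exact Or.inr (by rw [hsplit]; exact ha))
    show (B.encodeRunAux ms (B.runMerge l r n (U₁ ++ U₂).length (U₁ ++ U₂)).1).1
      = (B.encodeRunAux ms (B.runMerge l r n U₁.length U₁).1).1
        ++ (B.encodeRunAux ms (B.runMerge l r n U₂.length U₂).1).1
    rw [hsplit]
    exact hih

lemma decodeSeq_map_base (B : BPE σ τ) (S : List σ) :
    B.decodeSeq (S.map B.base) = S := by
  induction S with
  | nil => rfl
  | cons b S ih =>
    rw [List.map_cons, decodeSeq_cons, B.dec_base, ih]
    rfl

end BPE

/-- If no merge applied during the run of `encode` on `S₁ ++ S₂` crosses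
position `|S₁|`, then `encode (S₁ ++ S₂) = encode S₁ ++ encode S₂`. -/
theorem BPE.encode_append_of_no_crossing_merge {σ τ : Type*} [DecidableEq τ]
    (B : BPE σ τ) (hNF : B.NormalForm) (S₁ S₂ : List σ)
    (h : ¬ B.MergeCrossesInRun (S₁ ++ S₂) S₁.length) :
    B.encode (S₁ ++ S₂) = B.encode S₁ ++ B.encode S₂ := by
  have hms : ∀ x ∈ (B.merges.zipIdx.map (fun p => (p.2, p.1))), ∃ hx : x.1 < B.merges.length, B.merges[x.1] = x.2 := by
    intro x hx
    obtain ⟨p, hp, rfl⟩ := List.mem_map.mp hx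
    rw [List.mem_zipIdx_iff_getElem?] at hp
    rw [List.getElem?_eq_some_iff] at hp
    exact hp
  have hne : ∀ t ∈ (S₁ ++ S₂).map B.base, B.dec t ≠ [] := by
    intro t ht
    obtain ⟨b, -, hb⟩ := List.mem_map.mp ht
    rw [← hb, B.dec_base]
    simp
  have hmap : (S₁ ++ S₂).map B.base = S₁.map B.base ++ S₂.map B.base :=
    List.map_append
  have hcross : ∀ a ∈ (B.encodeRunAux (B.merges.zipIdx.map (fun p => (p.2, p.1)))
      (S₁.map B.base ++ S₂.map B.base)).2,
      ¬ B.AppCrosses a (B.decodeSeq (S₁.map B.base)).length := by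
    intro a ha hac
    refine h ⟨a, ?_, ?_⟩
    · show a ∈ (B.encodeRun (S₁ ++ S₂)).2
      rw [encodeRun, hmap]
      exact ha
    · rwa [B.decodeSeq_map_base] at hac
  have := B.encodeRunAux_split (B.merges.zipIdx.map (fun p => (p.2, p.1))) hms (S₁.map B.base) (S₂.map B.base)
    (by rwa [← hmap]) hcross
  show (B.encodeRun (S₁ ++ S₂)).1 = (B.encodeRun S₁).1 ++ (B.encodeRun S₂).1
  rw [encodeRun, encodeRun, encodeRun, hmap]
  exact this
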